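/- There exists a constant C > 0, depending only on M*, the supremum of β and the Lipschitz constant of β, such that for every t ∈ (0, t₁] and every σ as in the context: (i) ∫₀^t sup_{(m,x) ∈ Ω_M} |Q_l(σ,σ)(s,m,x)| ds ≤ C t ‖σ‖²_∞; (ii) for a.e. s ∈ (0,t) the map (m,x) ↦ Q_l(σ,σ)(s,m,x) is Lipschitz on Ω_M with constant at most C(‖σ‖²_∞ + L_σ²), so that ∫₀^t Lip(Q_l(σ,σ)(s,·)) ds ≤ C t (‖σ‖²_∞ + L_σ²). -/

import Mathlib

open MeasureTheory Set

noncomputable section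

/-- `Vec n` is ℝ^n with the Euclidean norm. -/
abbrev Vec (n : ℕ) : Type := EuclideanSpace ℝ (Fin n)

/-- `Ω = ℝ² × (0,1) ⊆ ℝ³`. -/
def Omg : Set (Vec 3) := {x | x (Fin.last 2) ∈ Set.Ioo (0:ℝ) 1}

lemma x0_mem : (WithLp.toLp 2 (fun _ => (1:ℝ)/2 : Fin 3 → ℝ) : Vec 3) ∈ Omg := by
  show (0:ℝ) < 1/2 ∧ (1:ℝ)/2 < 1
  constructor <;> norm_num

lemma bdd_ii {f : ℝ → ℝ} (hm : Measurable f) {M : ℝ}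
    (hb : ∀ a, |f a| ≤ M) (c d : ℝ) : IntervalIntegrable f volume c d := by
  rw [intervalIntegrable_iff]
  refine (integrableOn_const (C := M) ?_).mono' hm.aestronglyMeasurable
    (ae_of_all _ fun a => by simpa [Real.norm_eq_abs] using hb a)
  rw [Set.uIoc]; exact measure_Ioc_lt_top.ne

lemma abs_mul3_le {a b c A B C : ℝ} (ha : |a| ≤ A) (hb : |b| ≤ B) (hc : |c| ≤ C) :
    |a * b * c| ≤ A * B * C := by
  rw [abs_mul, abs_mul]
  have h0a := abs_nonneg a; have h0b := abs_nonneg b; have h0c := abs_nonneg c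
  exact mul_le_mul (mul_le_mul ha hb h0b (h0a.trans ha)) hc h0c
    (mul_nonneg (h0a.trans ha) (h0b.trans hb))

lemma ae_transfer_Icc {P : ℝ → Prop} {t t₁ : ℝ} (h : t ≤ t₁)
    (H : ∀ᵐ s ∂(volume.restrict (Set.Ioo 0 t₁)), P s) :
    ∀ᵐ s ∂(volume.restrict (Set.Icc 0 t)), P s := by
  rw [← Measure.restrict_congr_set Ioo_ae_eq_Icc]
  exact ae_restrict_of_ae_restrict_of_subset (Set.Ioo_subset_Ioo_right h) H

lemma ae_transfer_Ioo {P : ℝ → Prop} {t t₁ : ℝ} (h : t ≤ t₁)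
    (H : ∀ᵐ s ∂(volume.restrict (Set.Ioo 0 t₁)), P s) :
    ∀ᵐ s ∂(volume.restrict (Set.Ioo 0 t)), P s :=
  ae_restrict_of_ae_restrict_of_subset (Set.Ioo_subset_Ioo_right h) H

lemma integral_le_of_ae {t K : ℝ} (ht : 0 < t) (hK : 0 ≤ K) {f : ℝ → ℝ}
    (h : ∀ᵐ s ∂(volume.restrict (Set.Icc 0 t)), f s ≤ K) :
    ∫ s in (0:ℝ)..t, f s ≤ K * t := by
  by_cases hf : IntervalIntegrable f volume 0 t
  · have := intervalIntegral.integral_mono_ae_restrict ht.le hf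
      (intervalIntegrable_const (c := K)) h
    simpa [mul_comm] using this
  · rw [intervalIntegral.integral_undef hf]; positivity


/-- the coagulation operator
`Q_l(σ,σ)(s,m,x) = (m/2) ∫₀^m β(m',m−m') σ(s,m',x) σ(s,m−m',x) dm'` for
`m ≥ 0`, and `0` for `m < 0`. -/
def Qcoag (β : ℝ → ℝ → ℝ) (σ : ℝ → ℝ → Vec 3 → ℝ) (s m : ℝ) (x : Vec 3) : ℝ :=
  if 0 ≤ m then
    (m / 2) * ∫ m' in (0:ℝ)..m, β m' (m - m') * σ s m' x * σ s (m - m') x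
  else 0

section key
variable {Mstar B L N Lσ : ℝ} {β : ℝ → ℝ → ℝ} {σ : ℝ → ℝ → Vec 3 → ℝ} {s : ℝ}

lemma meas_f (hβmeas : Measurable (fun z : ℝ × ℝ => β z.1 z.2))
    (hσmeas : Measurable (fun z : ℝ × ℝ × Vec 3 => σ z.1 z.2.1 z.2.2))
    (m : ℝ) (x : Vec 3) :
    Measurable (fun a => β a (m - a) * σ s a x * σ s (m - a) x) := by
  have h1 : Measurable fun a : ℝ => β a (m - a) :=
    hβmeas.comp (measurable_id.prodMk (measurable_const.sub measurable_id))
  have h2 : Measurable fun a : ℝ => σ s a x :=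
    hσmeas.comp (measurable_const.prodMk (measurable_id.prodMk measurable_const))
  have h3 : Measurable fun a : ℝ => σ s (m - a) x :=
    hσmeas.comp (measurable_const.prodMk
      ((measurable_const.sub measurable_id).prodMk measurable_const))
  exact (h1.mul h2).mul h3

lemma bound_f (hβ0 : ∀ m m', 0 ≤ β m m') (hβB : ∀ m m', β m m' ≤ B)
    (hσN : ∀ m : ℝ, ∀ x ∈ Omg, |σ s m x| ≤ N)
    (m : ℝ) {x : Vec 3} (hx : x ∈ Omg) (a : ℝ) :
    |β a (m - a) * σ s a x * σ s (m - a) x| ≤ B * N * N :=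
  abs_mul3_le (by rw [abs_of_nonneg (hβ0 _ _)]; exact hβB _ _) (hσN a x hx) (hσN (m - a) x hx)
end key

section key2
variable {Mstar B L N Lσ : ℝ} {β : ℝ → ℝ → ℝ} {σ : ℝ → ℝ → Vec 3 → ℝ} {s : ℝ}

lemma I_bound (hβ0 : ∀ m m', 0 ≤ β m m') (hβB : ∀ m m', β m m' ≤ B)
    (hσN : ∀ m : ℝ, ∀ x ∈ Omg, |σ s m x| ≤ N)
    {m : ℝ} (hm : 0 ≤ m) {x : Vec 3} (hx : x ∈ Omg) :
    |∫ a in (0:ℝ)..m, β a (m - a) * σ s a x * σ s (m - a) x| ≤ B * N * N * m := by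
  have := intervalIntegral.norm_integral_le_of_norm_le_const (C := B * N * N)
    (f := fun a => β a (m - a) * σ s a x * σ s (m - a) x) (a := 0) (b := m)
    (fun a _ => by simpa only [Real.norm_eq_abs] using bound_f hβ0 hβB hσN m hx a)
  simpa [Real.norm_eq_abs, abs_of_nonneg hm] using this

lemma beta_small (hβL : ∀ m m' n n', |β m m' - β n n'| ≤ L * (|m - n| + |m' - n'|))
    (hβM : ∀ m m', Mstar ≤ m + m' → β m m' = 0)
    {m : ℝ} (hmM : m ≤ Mstar) (a : ℝ) : β a (m - a) ≤ L * (Mstar - m) := by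
  have h0 : β (a + (Mstar - m)) (m - a) = 0 := hβM _ _ (by linarith)
  have h1 := hβL a (m - a) (a + (Mstar - m)) (m - a)
  rw [h0] at h1
  have h2 : |a - (a + (Mstar - m))| = Mstar - m := by
    rw [show a - (a + (Mstar - m)) = -(Mstar - m) by ring, abs_neg,
      abs_of_nonneg (by linarith)]
  calc β a (m - a) ≤ |β a (m - a) - 0| := by rw [sub_zero]; exact le_abs_self _
    _ ≤ L * (|a - (a + (Mstar - m))| + |m - a - (m - a)|) := h1
    _ = L * (Mstar - m) := by rw [h2]; simp

lemma I_bound_refined (hβ0 : ∀ m m', 0 ≤ β m m')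
    (hβL : ∀ m m' n n', |β m m' - β n n'| ≤ L * (|m - n| + |m' - n'|))
    (hβM : ∀ m m', Mstar ≤ m + m' → β m m' = 0)
    (hσN : ∀ m : ℝ, ∀ x ∈ Omg, |σ s m x| ≤ N)
    {m : ℝ} (hm : 0 ≤ m) (hmM : m ≤ Mstar) {x : Vec 3} (hx : x ∈ Omg) :
    |∫ a in (0:ℝ)..m, β a (m - a) * σ s a x * σ s (m - a) x| ≤
      L * (Mstar - m) * N * N * m := by
  have := intervalIntegral.norm_integral_le_of_norm_le_const (C := L * (Mstar - m) * N * N)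
    (f := fun a => β a (m - a) * σ s a x * σ s (m - a) x) (a := 0) (b := m)
    (fun a _ => by
      have hb : |β a (m - a)| ≤ L * (Mstar - m) := by
        rw [abs_of_nonneg (hβ0 _ _)]; exact beta_small hβL hβM hmM a
      simpa only [Real.norm_eq_abs] using abs_mul3_le hb (hσN a x hx) (hσN (m - a) x hx))
  simpa [Real.norm_eq_abs, abs_of_nonneg hm] using this

lemma Q_zero (hβM : ∀ m m', Mstar ≤ m + m' → β m m' = 0) (hM : 0 < Mstar)
    {m : ℝ} (hmM : Mstar ≤ m) (x : Vec 3) : Qcoag β σ s m x = 0 := by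
  have hm : (0:ℝ) ≤ m := le_trans hM.le hmM
  have h0 : ∀ a : ℝ, β a (m - a) * σ s a x * σ s (m - a) x = 0 := fun a => by
    rw [hβM a (m - a) (by linarith)]; ring
  simp [Qcoag, if_pos hm, h0]
end key2

section key3
variable {Mstar B L N Lσ : ℝ} {β : ℝ → ℝ → ℝ} {σ : ℝ → ℝ → Vec 3 → ℝ} {s : ℝ}

lemma Q_le_linear (hM : 0 < Mstar) (hB : 0 ≤ B) (hN : 0 ≤ N)
    (hβ0 : ∀ m m', 0 ≤ β m m') (hβB : ∀ m m', β m m' ≤ B)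
    (hβM : ∀ m m', Mstar ≤ m + m' → β m m' = 0)
    (hσN : ∀ m : ℝ, ∀ x ∈ Omg, |σ s m x| ≤ N)
    {m : ℝ} (hm : 0 ≤ m) {x : Vec 3} (hx : x ∈ Omg) :
    |Qcoag β σ s m x| ≤ (B * N * N * Mstar / 2) * m := by
  rcases le_or_gt Mstar m with h | h
  · rw [Q_zero hβM hM h]
    simp only [abs_zero]
    have : 0 ≤ B * N * N * Mstar := by positivity
    nlinarith
  · rw [Qcoag, if_pos hm, abs_mul, abs_of_nonneg (by linarith : (0:ℝ) ≤ m / 2)]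
    have hI := I_bound hβ0 hβB hσN hm hx
    have h1 : m / 2 * |∫ a in (0:ℝ)..m, β a (m - a) * σ s a x * σ s (m - a) x| ≤
        m / 2 * (B * N * N * m) :=
      mul_le_mul_of_nonneg_left hI (by linarith)
    have h2 : 0 ≤ B * N * N := by positivity
    nlinarith [mul_nonneg (mul_nonneg h2 hm) (by linarith : (0:ℝ) ≤ Mstar - m)]

lemma Q_le_const (hM : 0 < Mstar) (hB : 0 ≤ B) (hN : 0 ≤ N)
    (hβ0 : ∀ m m', 0 ≤ β m m') (hβB : ∀ m m', β m m' ≤ B)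
    (hβM : ∀ m m', Mstar ≤ m + m' → β m m' = 0)
    (hσN : ∀ m : ℝ, ∀ x ∈ Omg, |σ s m x| ≤ N)
    (m : ℝ) {x : Vec 3} (hx : x ∈ Omg) :
    |Qcoag β σ s m x| ≤ B * N * N * Mstar * Mstar / 2 := by
  rcases lt_or_ge m 0 with h | h
  · rw [Qcoag, if_neg (not_le.2 h)]; simp only [abs_zero]; positivity
  · rcases le_or_gt Mstar m with h2 | h2
    · rw [Q_zero hβM hM h2]; simp only [abs_zero]; positivity
    · have := Q_le_linear hM hB hN hβ0 hβB hβM hσN h hx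
      have h3 : 0 ≤ B * N * N * Mstar / 2 := by positivity
      nlinarith

lemma Q_x_lip (hM : 0 < Mstar) (hB : 0 ≤ B) (hN : 0 ≤ N) (hLσ : 0 ≤ Lσ)
    (hβmeas : Measurable (fun z : ℝ × ℝ => β z.1 z.2))
    (hσmeas : Measurable (fun z : ℝ × ℝ × Vec 3 => σ z.1 z.2.1 z.2.2))
    (hβ0 : ∀ m m', 0 ≤ β m m') (hβB : ∀ m m', β m m' ≤ B)
    (hβM : ∀ m m', Mstar ≤ m + m' → β m m' = 0)
    (hσN : ∀ m : ℝ, ∀ x ∈ Omg, |σ s m x| ≤ N)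
    (hσL : ∀ m m' : ℝ, ∀ x ∈ Omg, ∀ x' ∈ Omg,
      |σ s m x - σ s m' x'| ≤ Lσ * (|m - m'| + ‖x - x'‖))
    (m : ℝ) {x x' : Vec 3} (hx : x ∈ Omg) (hx' : x' ∈ Omg) :
    |Qcoag β σ s m x - Qcoag β σ s m x'| ≤
      B * Mstar * Mstar * N * Lσ * ‖x - x'‖ := by
  rcases lt_or_ge m 0 with h | h
  · simp only [Qcoag, if_neg (not_le.2 h), sub_self, abs_zero]; positivity
  · rcases le_or_gt Mstar m with h2 | h2
    · rw [Q_zero hβM hM h2, Q_zero hβM hM h2]; simp only [sub_self, abs_zero]; positivity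
    · -- 0 ≤ m < Mstar
      simp only [Qcoag, if_pos h]
      have hii := fun (y : Vec 3) (hy : y ∈ Omg) =>
        bdd_ii (meas_f hβmeas hσmeas m y) (bound_f hβ0 hβB hσN m hy) 0 m
      rw [show m / 2 * (∫ a in (0:ℝ)..m, β a (m - a) * σ s a x * σ s (m - a) x) -
            m / 2 * (∫ a in (0:ℝ)..m, β a (m - a) * σ s a x' * σ s (m - a) x') =
          m / 2 * ((∫ a in (0:ℝ)..m, β a (m - a) * σ s a x * σ s (m - a) x) -
            (∫ a in (0:ℝ)..m, β a (m - a) * σ s a x' * σ s (m - a) x')) by ring,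
        ← intervalIntegral.integral_sub (hii x hx) (hii x' hx')]
      have hsig : ∀ a b : ℝ, |σ s a x - σ s b x'| ≤ Lσ * (|a - b| + ‖x - x'‖) :=
        fun a b => hσL a b x hx x' hx'
      have hbd : ∀ a : ℝ,
          |β a (m - a) * σ s a x * σ s (m - a) x -
            β a (m - a) * σ s a x' * σ s (m - a) x'| ≤
          2 * B * N * (Lσ * ‖x - x'‖) := by
        intro a
        have e : β a (m - a) * σ s a x * σ s (m - a) x -
            β a (m - a) * σ s a x' * σ s (m - a) x' =
            β a (m - a) * σ s a x * (σ s (m - a) x - σ s (m - a) x') +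
            β a (m - a) * (σ s a x - σ s a x') * σ s (m - a) x' := by ring
        have hb : |β a (m - a)| ≤ B := by rw [abs_of_nonneg (hβ0 _ _)]; exact hβB _ _
        have hs1 : |σ s (m - a) x - σ s (m - a) x'| ≤ Lσ * ‖x - x'‖ := by
          have := hsig (m - a) (m - a); simpa using this
        have hs2 : |σ s a x - σ s a x'| ≤ Lσ * ‖x - x'‖ := by
          have := hsig a a; simpa using this
        calc |β a (m - a) * σ s a x * σ s (m - a) x -
            β a (m - a) * σ s a x' * σ s (m - a) x'|
            = |β a (m - a) * σ s a x * (σ s (m - a) x - σ s (m - a) x') +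
              β a (m - a) * (σ s a x - σ s a x') * σ s (m - a) x'| := by rw [e]
          _ ≤ |β a (m - a) * σ s a x * (σ s (m - a) x - σ s (m - a) x')| +
              |β a (m - a) * (σ s a x - σ s a x') * σ s (m - a) x'| := abs_add_le _ _
          _ ≤ B * N * (Lσ * ‖x - x'‖) + B * (Lσ * ‖x - x'‖) * N :=
              add_le_add (abs_mul3_le hb (hσN a x hx) hs1)
                (abs_mul3_le hb hs2 (hσN (m - a) x' hx'))
          _ = 2 * B * N * (Lσ * ‖x - x'‖) := by ring
      have hint := intervalIntegral.norm_integral_le_of_norm_le_const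
        (C := 2 * B * N * (Lσ * ‖x - x'‖)) (a := 0) (b := m)
        (f := fun a => β a (m - a) * σ s a x * σ s (m - a) x -
          β a (m - a) * σ s a x' * σ s (m - a) x')
        (fun a _ => by simpa only [Real.norm_eq_abs] using hbd a)
      rw [Real.norm_eq_abs, sub_zero, abs_of_nonneg h] at hint
      rw [abs_mul, abs_of_nonneg (by linarith : (0:ℝ) ≤ m / 2)]
      have hstep : m / 2 * |∫ a in (0:ℝ)..m,
          (β a (m - a) * σ s a x * σ s (m - a) x -
            β a (m - a) * σ s a x' * σ s (m - a) x')| ≤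
          m / 2 * (2 * B * N * (Lσ * ‖x - x'‖) * m) :=
        mul_le_mul_of_nonneg_left hint (by linarith)
      have hnn : 0 ≤ B * N * (Lσ * ‖x - x'‖) := by positivity
      nlinarith [mul_nonneg (mul_nonneg hnn (by linarith : (0:ℝ) ≤ Mstar + m))
        (by linarith : (0:ℝ) ≤ Mstar - m)]
end key3

section key4
variable {Mstar B L N Lσ : ℝ} {β : ℝ → ℝ → ℝ} {σ : ℝ → ℝ → Vec 3 → ℝ} {s : ℝ}

set_option maxHeartbeats 1600000 in
lemma Q_m_lip (hM : 0 < Mstar) (hB : 0 ≤ B) (hL : 0 ≤ L) (hN : 0 ≤ N) (hLσ : 0 ≤ Lσ)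
    (hβmeas : Measurable (fun z : ℝ × ℝ => β z.1 z.2))
    (hσmeas : Measurable (fun z : ℝ × ℝ × Vec 3 => σ z.1 z.2.1 z.2.2))
    (hβ0 : ∀ m m', 0 ≤ β m m') (hβB : ∀ m m', β m m' ≤ B)
    (hβL : ∀ m m' n n', |β m m' - β n n'| ≤ L * (|m - n| + |m' - n'|))
    (hβM : ∀ m m', Mstar ≤ m + m' → β m m' = 0)
    (hσN : ∀ m : ℝ, ∀ x ∈ Omg, |σ s m x| ≤ N)
    (hσL : ∀ m m' : ℝ, ∀ x ∈ Omg, ∀ x' ∈ Omg,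
      |σ s m x - σ s m' x'| ≤ Lσ * (|m - m'| + ‖x - x'‖))
    {m m' : ℝ} (hmm : m ≤ m') {x : Vec 3} (hx : x ∈ Omg) :
    |Qcoag β σ s m x - Qcoag β σ s m' x| ≤
      (B + L) * (Mstar + 1) ^ 2 * (N * N + N * Lσ) * (m' - m) := by
  have hNN : 0 ≤ N * N + N * Lσ := add_nonneg (mul_self_nonneg N) (mul_nonneg hN hLσ)
  have hW : (0:ℝ) < (Mstar + 1) ^ 2 := by positivity
  have hd : (0:ℝ) ≤ m' - m := by linarith
  have hK0 : 0 ≤ (B + L) * (Mstar + 1) ^ 2 * (N * N + N * Lσ) :=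
    mul_nonneg (mul_nonneg (by linarith) hW.le) hNN
  have hBNN : 0 ≤ B * N * N := by positivity
  have hcK : B * N * N * Mstar / 2 ≤ (B + L) * (Mstar + 1) ^ 2 * (N * N + N * Lσ) := by
    nlinarith [mul_nonneg hBNN hM.le, mul_nonneg hBNN (mul_nonneg hM.le hM.le),
      mul_nonneg (mul_nonneg hB (mul_nonneg hN hLσ)) hW.le,
      mul_nonneg (mul_nonneg hL hW.le) hNN, hBNN]
  rcases lt_or_ge m' 0 with h | h
  · simp only [Qcoag]
    rw [if_neg (not_le.2 (lt_of_le_of_lt hmm h)), if_neg (not_le.2 h)]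
    simp only [sub_self, abs_zero]
    exact mul_nonneg hK0 hd
  rcases lt_or_ge m 0 with h2 | h2
  · rw [show Qcoag β σ s m x = 0 by rw [Qcoag, if_neg (not_le.2 h2)], zero_sub, abs_neg]
    calc |Qcoag β σ s m' x| ≤ B * N * N * Mstar / 2 * m' :=
          Q_le_linear hM hB hN hβ0 hβB hβM hσN h hx
      _ ≤ B * N * N * Mstar / 2 * (m' - m) :=
          mul_le_mul_of_nonneg_left (by linarith) (by positivity)
      _ ≤ (B + L) * (Mstar + 1) ^ 2 * (N * N + N * Lσ) * (m' - m) :=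
          mul_le_mul_of_nonneg_right hcK hd
  rcases le_or_gt Mstar m with h3 | h3
  · rw [Q_zero hβM hM h3, Q_zero hβM hM (le_trans h3 hmm)]
    simp only [sub_self, abs_zero]
    exact mul_nonneg hK0 hd
  rcases lt_or_ge Mstar m' with h4 | h4
  · -- 0 ≤ m < Mstar < m'
    rw [Q_zero hβM hM h4.le, sub_zero, Qcoag, if_pos h2, abs_mul,
      abs_of_nonneg (by linarith : (0:ℝ) ≤ m / 2)]
    have hI := I_bound_refined hβ0 hβL hβM hσN h2 h3.le hx
    refine le_trans (mul_le_mul_of_nonneg_left hI (by linarith : (0:ℝ) ≤ m / 2)) ?_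
    have hLNN : 0 ≤ L * (N * N) := mul_nonneg hL (mul_self_nonneg N)
    have he : (0:ℝ) ≤ Mstar - m := by linarith
    have hde : Mstar - m ≤ m' - m := by linarith
    have hm2 : m * m / 2 ≤ (Mstar + 1) ^ 2 := by
      nlinarith [mul_nonneg (sub_nonneg.2 h3.le) (by linarith : (0:ℝ) ≤ Mstar + m)]
    have step1 : m / 2 * (L * (Mstar - m) * N * N * m) ≤
        L * (N * N) * (Mstar + 1) ^ 2 * (m' - m) := by
      nlinarith [mul_nonneg (mul_nonneg hLNN hW.le) (by linarith : (0:ℝ) ≤ (m' - m) - (Mstar - m)),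
        mul_nonneg (mul_nonneg hLNN he) (by linarith : (0:ℝ) ≤ (Mstar + 1) ^ 2 - m * m / 2)]
    refine step1.trans ?_
    have hc2 : L * (N * N) * (Mstar + 1) ^ 2 ≤ (B + L) * (Mstar + 1) ^ 2 * (N * N + N * Lσ) := by
      nlinarith [mul_nonneg (mul_nonneg hB hW.le) (mul_self_nonneg N),
        mul_nonneg (mul_nonneg hB hW.le) (mul_nonneg hN hLσ),
        mul_nonneg (mul_nonneg hL hW.le) (mul_nonneg hN hLσ)]
    exact mul_le_mul_of_nonneg_right hc2 hd
  · -- main case 0 ≤ m ≤ m' ≤ Mstar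
    have hm'0 : (0:ℝ) ≤ m' := h
    have eQ1 : Qcoag β σ s m x =
        m / 2 * ∫ a in (0:ℝ)..m, β a (m - a) * σ s a x * σ s (m - a) x := by
      rw [Qcoag, if_pos h2]
    have eQ2 : Qcoag β σ s m' x =
        m' / 2 * ∫ a in (0:ℝ)..m', β a (m' - a) * σ s a x * σ s (m' - a) x := by
      rw [Qcoag, if_pos hm'0]
    rw [eQ1, eQ2]
    have hii := fun (c d mm : ℝ) =>
      bdd_ii (meas_f hβmeas hσmeas mm x) (bound_f hβ0 hβB hσN mm hx) c d
    have e1 : (∫ a in (0:ℝ)..m, β a (m - a) * σ s a x * σ s (m - a) x) -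
        (∫ a in (0:ℝ)..m, β a (m' - a) * σ s a x * σ s (m' - a) x) =
        ∫ a in (0:ℝ)..m, (β a (m - a) * σ s a x * σ s (m - a) x -
          β a (m' - a) * σ s a x * σ s (m' - a) x) :=
      (intervalIntegral.integral_sub (hii 0 m m) (hii 0 m m')).symm
    have e2 : (∫ a in (0:ℝ)..m', β a (m' - a) * σ s a x * σ s (m' - a) x) -
        (∫ a in (0:ℝ)..m, β a (m' - a) * σ s a x * σ s (m' - a) x) =
        ∫ a in m..m', β a (m' - a) * σ s a x * σ s (m' - a) x :=
      intervalIntegral.integral_interval_sub_left (hii 0 m' m') (hii 0 m m')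
    have key : m / 2 * (∫ a in (0:ℝ)..m, β a (m - a) * σ s a x * σ s (m - a) x) -
        m' / 2 * (∫ a in (0:ℝ)..m', β a (m' - a) * σ s a x * σ s (m' - a) x) =
        (m - m') / 2 * (∫ a in (0:ℝ)..m', β a (m' - a) * σ s a x * σ s (m' - a) x) +
        m / 2 * ((∫ a in (0:ℝ)..m, (β a (m - a) * σ s a x * σ s (m - a) x -
            β a (m' - a) * σ s a x * σ s (m' - a) x)) -
          (∫ a in m..m', β a (m' - a) * σ s a x * σ s (m' - a) x)) := by
      rw [← e1, ← e2]; ring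
    rw [key]
    -- bounds
    have hI' : |∫ a in (0:ℝ)..m', β a (m' - a) * σ s a x * σ s (m' - a) x| ≤
        B * N * N * m' := I_bound hβ0 hβB hσN hm'0 hx
    have hJ : |∫ a in m..m', β a (m' - a) * σ s a x * σ s (m' - a) x| ≤
        B * N * N * (m' - m) := by
      have := intervalIntegral.norm_integral_le_of_norm_le_const (C := B * N * N)
        (f := fun a => β a (m' - a) * σ s a x * σ s (m' - a) x) (a := m) (b := m')
        (fun a _ => by simpa only [Real.norm_eq_abs] using bound_f hβ0 hβB hσN m' hx a)
      simpa only [Real.norm_eq_abs, abs_of_nonneg hd] using this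
    have hD : ∀ a : ℝ, |β a (m - a) * σ s a x * σ s (m - a) x -
        β a (m' - a) * σ s a x * σ s (m' - a) x| ≤
        (L * N * N + B * N * Lσ) * (m' - m) := by
      intro a
      have e : β a (m - a) * σ s a x * σ s (m - a) x -
          β a (m' - a) * σ s a x * σ s (m' - a) x =
          (β a (m - a) - β a (m' - a)) * σ s a x * σ s (m - a) x +
          β a (m' - a) * σ s a x * (σ s (m - a) x - σ s (m' - a) x) := by ring
      have t1 : |β a (m - a) - β a (m' - a)| ≤ L * (m' - m) := by
        have := hβL a (m - a) a (m' - a)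
        simp only [sub_self, abs_zero, zero_add] at this
        calc |β a (m - a) - β a (m' - a)| ≤ L * |m - a - (m' - a)| := this
          _ = L * (m' - m) := by
            rw [show m - a - (m' - a) = -(m' - m) by ring, abs_neg, abs_of_nonneg hd]
      have t2 : |σ s (m - a) x - σ s (m' - a) x| ≤ Lσ * (m' - m) := by
        have := hσL (m - a) (m' - a) x hx x hx
        simp only [sub_self, norm_zero, add_zero] at this
        calc |σ s (m - a) x - σ s (m' - a) x| ≤ Lσ * |m - a - (m' - a)| := this
          _ = Lσ * (m' - m) := by
            rw [show m - a - (m' - a) = -(m' - m) by ring, abs_neg, abs_of_nonneg hd]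
      have hb : |β a (m' - a)| ≤ B := by rw [abs_of_nonneg (hβ0 _ _)]; exact hβB _ _
      calc |β a (m - a) * σ s a x * σ s (m - a) x -
          β a (m' - a) * σ s a x * σ s (m' - a) x|
          = |(β a (m - a) - β a (m' - a)) * σ s a x * σ s (m - a) x +
            β a (m' - a) * σ s a x * (σ s (m - a) x - σ s (m' - a) x)| := by rw [e]
        _ ≤ |(β a (m - a) - β a (m' - a)) * σ s a x * σ s (m - a) x| +
            |β a (m' - a) * σ s a x * (σ s (m - a) x - σ s (m' - a) x)| := abs_add_le _ _
        _ ≤ L * (m' - m) * N * N + B * N * (Lσ * (m' - m)) :=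
            add_le_add (abs_mul3_le t1 (hσN a x hx) (hσN (m - a) x hx))
              (abs_mul3_le hb (hσN a x hx) t2)
        _ = (L * N * N + B * N * Lσ) * (m' - m) := by ring
    have hKK : |∫ a in (0:ℝ)..m, (β a (m - a) * σ s a x * σ s (m - a) x -
        β a (m' - a) * σ s a x * σ s (m' - a) x)| ≤
        (L * N * N + B * N * Lσ) * (m' - m) * m := by
      have := intervalIntegral.norm_integral_le_of_norm_le_const
        (C := (L * N * N + B * N * Lσ) * (m' - m)) (a := 0) (b := m)
        (f := fun a => β a (m - a) * σ s a x * σ s (m - a) x -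
          β a (m' - a) * σ s a x * σ s (m' - a) x)
        (fun a _ => by simpa only [Real.norm_eq_abs] using hD a)
      simpa only [Real.norm_eq_abs, sub_zero, abs_of_nonneg h2] using this
    -- assemble
    have habs1 : |(m - m') / 2| = (m' - m) / 2 := by
      rw [abs_div, show m - m' = -(m' - m) by ring, abs_neg, abs_of_nonneg hd]; norm_num
    have hsubabs : |(∫ a in (0:ℝ)..m, (β a (m - a) * σ s a x * σ s (m - a) x -
        β a (m' - a) * σ s a x * σ s (m' - a) x)) -
        (∫ a in m..m', β a (m' - a) * σ s a x * σ s (m' - a) x)| ≤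
        (L * N * N + B * N * Lσ) * (m' - m) * m + B * N * N * (m' - m) := by
      refine le_trans (abs_sub _ _) (add_le_add hKK hJ)
    have hE : 0 ≤ L * N * N + B * N * Lσ :=
      add_nonneg (mul_nonneg (mul_nonneg hL hN) hN) (mul_nonneg (mul_nonneg hB hN) hLσ)
    calc |(m - m') / 2 * (∫ a in (0:ℝ)..m', β a (m' - a) * σ s a x * σ s (m' - a) x) +
        m / 2 * ((∫ a in (0:ℝ)..m, (β a (m - a) * σ s a x * σ s (m - a) x -
            β a (m' - a) * σ s a x * σ s (m' - a) x)) -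
          (∫ a in m..m', β a (m' - a) * σ s a x * σ s (m' - a) x))|
        ≤ |(m - m') / 2| * |∫ a in (0:ℝ)..m', β a (m' - a) * σ s a x * σ s (m' - a) x| +
          (m / 2) * |(∫ a in (0:ℝ)..m, (β a (m - a) * σ s a x * σ s (m - a) x -
            β a (m' - a) * σ s a x * σ s (m' - a) x)) -
          (∫ a in m..m', β a (m' - a) * σ s a x * σ s (m' - a) x)| := by
          refine le_trans (abs_add_le _ _) ?_
          rw [abs_mul, abs_mul, abs_of_nonneg (by linarith : (0:ℝ) ≤ m / 2)]
      _ ≤ (m' - m) / 2 * (B * N * N * m') +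
          m / 2 * ((L * N * N + B * N * Lσ) * (m' - m) * m + B * N * N * (m' - m)) := by
          rw [habs1]
          refine add_le_add (mul_le_mul_of_nonneg_left hI' (by linarith))
            (mul_le_mul_of_nonneg_left hsubabs (by linarith))
      _ ≤ B * N * N * Mstar * (m' - m) +
          ((L * N * N + B * N * Lσ) * Mstar * Mstar * (m' - m) +
            B * N * N * Mstar * (m' - m)) := by
          have u1 : (m' - m) / 2 * (B * N * N * m') ≤ B * N * N * Mstar * (m' - m) := by
            nlinarith [mul_nonneg (mul_nonneg hBNN hd) (by linarith : (0:ℝ) ≤ Mstar - m'),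
              mul_nonneg (mul_nonneg hBNN hd) (by linarith : (0:ℝ) ≤ Mstar)]
          have u2 : m / 2 * ((L * N * N + B * N * Lσ) * (m' - m) * m) ≤
              (L * N * N + B * N * Lσ) * Mstar * Mstar * (m' - m) := by
            nlinarith [mul_nonneg (mul_nonneg hE hd)
                (mul_nonneg (by linarith : (0:ℝ) ≤ Mstar - m) (by linarith : (0:ℝ) ≤ Mstar + m)),
              mul_nonneg (mul_nonneg hE hd) (mul_nonneg hM.le hM.le)]
          have u3 : m / 2 * (B * N * N * (m' - m)) ≤ B * N * N * Mstar * (m' - m) := by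
            nlinarith [mul_nonneg (mul_nonneg hBNN hd) (by linarith : (0:ℝ) ≤ Mstar - m),
              mul_nonneg (mul_nonneg hBNN hd) (by linarith : (0:ℝ) ≤ Mstar)]
          nlinarith [u1, u2, u3]
      _ ≤ (B + L) * (Mstar + 1) ^ 2 * (N * N + N * Lσ) * (m' - m) := by
          have hc2 : B * N * N * Mstar + ((L * N * N + B * N * Lσ) * Mstar * Mstar +
              B * N * N * Mstar) ≤ (B + L) * (Mstar + 1) ^ 2 * (N * N + N * Lσ) := by
            nlinarith [mul_nonneg hBNN (mul_nonneg hM.le hM.le), hBNN,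
              mul_nonneg (mul_nonneg hB (mul_nonneg hN hLσ)) hM.le,
              mul_nonneg hB (mul_nonneg hN hLσ),
              mul_nonneg (mul_nonneg hL (mul_nonneg hN hN)) hM.le,
              mul_nonneg hL (mul_nonneg hN hN),
              mul_nonneg (mul_nonneg hL (mul_nonneg hN hLσ)) hW.le]
          calc B * N * N * Mstar * (m' - m) +
              ((L * N * N + B * N * Lσ) * Mstar * Mstar * (m' - m) +
                B * N * N * Mstar * (m' - m)) =
              (B * N * N * Mstar + ((L * N * N + B * N * Lσ) * Mstar * Mstar +
                B * N * N * Mstar)) * (m' - m) := by ring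
            _ ≤ (B + L) * (Mstar + 1) ^ 2 * (N * N + N * Lσ) * (m' - m) :=
                mul_le_mul_of_nonneg_right hc2 hd
end key4



set_option maxHeartbeats 1600000 in
/-- estimates (9-stime-termini-intg) on the coagulation
term `Q_l(σ,σ)`; the constant `C` depends only on `M*`, `sup β`, `Lip β`. -/
theorem stmt18 (t₁ Mstar : ℝ) (ht₁ : 0 < t₁) (hMstar : 0 < Mstar)
    (Bβ Lβ : ℝ) :
    ∃ C > 0, ∀ β : ℝ → ℝ → ℝ,
      Measurable (fun z : ℝ × ℝ => β z.1 z.2) →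
      (∀ m m', 0 ≤ β m m') → (∀ m m', β m m' ≤ Bβ) →
      (∀ m m' n n', |β m m' - β n n'| ≤ Lβ * (|m - n| + |m' - n'|)) →
      (∀ m m', Mstar ≤ m + m' → β m m' = 0) →
      ∀ σ : ℝ → ℝ → Vec 3 → ℝ, ∀ N Lσ : ℝ,
      Measurable (fun z : ℝ × ℝ × Vec 3 => σ z.1 z.2.1 z.2.2) →
      -- `N` bounds `|σ|` and `Lσ` is a Lipschitz constant of `σ(s,·,·)`, a.e. in `s`
      (∀ᵐ s ∂(volume.restrict (Set.Ioo 0 t₁)), ∀ m : ℝ, ∀ x ∈ Omg,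
        |σ s m x| ≤ N) →
      (∀ᵐ s ∂(volume.restrict (Set.Ioo 0 t₁)), ∀ m m' : ℝ, ∀ x ∈ Omg, ∀ x' ∈ Omg,
        |σ s m x - σ s m' x'| ≤ Lσ * (|m - m'| + ‖x - x'‖)) →
      ∀ t ∈ Set.Ioc 0 t₁,
        -- (i)
        ((∫ s in (0:ℝ)..t,
            sSup {v | ∃ m : ℝ, ∃ x ∈ Omg, v = |Qcoag β σ s m x|}) ≤
          C * t * N ^ 2) ∧
        -- (ii)  a.e. Lipschitz bound ...
        (∀ᵐ s ∂(volume.restrict (Set.Ioo 0 t)),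
          ∀ m m' : ℝ, ∀ x ∈ Omg, ∀ x' ∈ Omg,
            |Qcoag β σ s m x - Qcoag β σ s m' x'| ≤
              C * (N ^ 2 + Lσ ^ 2) * (|m - m'| + ‖x - x'‖)) ∧
        -- ... and the resulting `L¹` bound on the least Lipschitz constant
        ((∫ s in (0:ℝ)..t,
            sInf {L | 0 ≤ L ∧ ∀ m m' : ℝ, ∀ x ∈ Omg, ∀ x' ∈ Omg,
              |Qcoag β σ s m x - Qcoag β σ s m' x'| ≤
                L * (|m - m'| + ‖x - x'‖)}) ≤
          C * t * (N ^ 2 + Lσ ^ 2)) := by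
  refine ⟨4 * (|Bβ| + |Lβ| + 1) * (Mstar + 1) ^ 2, by positivity, ?_⟩
  intro β hβmeas hβ0 hβB hβL hβM σ N Lσ hσmeas hσN hσL t ht
  obtain ⟨ht0, htt1⟩ := ht
  set C := 4 * (|Bβ| + |Lβ| + 1) * (Mstar + 1) ^ 2 with hCdef
  have hC : 0 < C := by positivity
  have hW : (0:ℝ) < (Mstar + 1) ^ 2 := by positivity
  have hB0 : 0 ≤ Bβ := le_trans (hβ0 0 0) (hβB 0 0)
  have hL0 : 0 ≤ Lβ := by
    have h := hβL 1 0 0 0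
    have h2 := abs_nonneg (β 1 0 - β 0 0)
    norm_num at h
    linarith
  -- nonemptiness of the a.e. filter
  have hne : (volume.restrict (Set.Ioo (0:ℝ) t₁)) ≠ 0 := by
    intro h0
    have h1 := congrArg (fun μ : Measure ℝ => μ (Set.Ioo (0:ℝ) t₁)) h0
    simp [Real.volume_Ioo, ENNReal.ofReal_eq_zero] at h1
    linarith
  haveI : (ae (volume.restrict (Set.Ioo (0:ℝ) t₁))).NeBot := ae_neBot.2 hne
  obtain ⟨s₀, hs₀N, hs₀L⟩ := (hσN.and hσL).exists
  have hN0 : 0 ≤ N := le_trans (abs_nonneg _) (hs₀N 0 _ x0_mem)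
  have hLσ0 : 0 ≤ Lσ := by
    have h := hs₀L 0 1 _ x0_mem _ x0_mem
    have h2 := abs_nonneg (σ s₀ 0 (WithLp.toLp 2 (fun _ => (1:ℝ)/2 : Fin 3 → ℝ) : Vec 3) -
      σ s₀ 1 (WithLp.toLp 2 (fun _ => (1:ℝ)/2 : Fin 3 → ℝ) : Vec 3))
    simp at h
    linarith
  have hNN : 0 ≤ N * N + N * Lσ := add_nonneg (mul_self_nonneg N) (mul_nonneg hN0 hLσ0)
  have hZ : 0 ≤ N ^ 2 + Lσ ^ 2 := by positivity
  -- pointwise Lipschitz estimate for good s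
  have main : ∀ s : ℝ, (∀ m : ℝ, ∀ x ∈ Omg, |σ s m x| ≤ N) →
      (∀ m m' : ℝ, ∀ x ∈ Omg, ∀ x' ∈ Omg,
        |σ s m x - σ s m' x'| ≤ Lσ * (|m - m'| + ‖x - x'‖)) →
      ∀ m m' : ℝ, ∀ x ∈ Omg, ∀ x' ∈ Omg,
        |Qcoag β σ s m x - Qcoag β σ s m' x'| ≤
          C * (N ^ 2 + Lσ ^ 2) * (|m - m'| + ‖x - x'‖) := by
    intro s hsN hsL m m' x hx x' hx'
    have hxlip := Q_x_lip hMstar hB0 hN0 hLσ0 hβmeas hσmeas hβ0 hβB hβM hsN hsL m' hx hx'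
    have hmlip : |Qcoag β σ s m x - Qcoag β σ s m' x| ≤
        (Bβ + Lβ) * (Mstar + 1) ^ 2 * (N * N + N * Lσ) * |m - m'| := by
      rcases le_total m m' with hc | hc
      · have h := Q_m_lip hMstar hB0 hL0 hN0 hLσ0 hβmeas hσmeas hβ0 hβB hβL hβM hsN hsL hc hx
        rwa [abs_of_nonpos (sub_nonpos.2 hc), neg_sub]
      · have h := Q_m_lip hMstar hB0 hL0 hN0 hLσ0 hβmeas hσmeas hβ0 hβB hβL hβM hsN hsL hc hx
        rw [abs_sub_comm, abs_of_nonneg (sub_nonneg.2 hc)]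
        exact h
    have htri := abs_sub_le (Qcoag β σ s m x) (Qcoag β σ s m' x) (Qcoag β σ s m' x')
    have h1 : N * N + N * Lσ ≤ 2 * (N ^ 2 + Lσ ^ 2) := by
      nlinarith [sq_nonneg (N - Lσ), sq_nonneg N, sq_nonneg Lσ]
    have h2 : Bβ + Lβ ≤ 2 * (|Bβ| + |Lβ| + 1) := by
      have := le_abs_self Bβ; have := le_abs_self Lβ; linarith
    have hK1C : (Bβ + Lβ) * (Mstar + 1) ^ 2 * (N * N + N * Lσ) ≤ C * (N ^ 2 + Lσ ^ 2) := by
      calc (Bβ + Lβ) * (Mstar + 1) ^ 2 * (N * N + N * Lσ)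
          ≤ (2 * (|Bβ| + |Lβ| + 1) * (Mstar + 1) ^ 2) * (2 * (N ^ 2 + Lσ ^ 2)) := by
            refine mul_le_mul (mul_le_mul_of_nonneg_right h2 hW.le) h1 hNN (by positivity)
        _ = C * (N ^ 2 + Lσ ^ 2) := by rw [hCdef]; ring
    have hK2C : Bβ * Mstar * Mstar * N * Lσ ≤ C * (N ^ 2 + Lσ ^ 2) := by
      have hNLσ : N * Lσ ≤ N ^ 2 + Lσ ^ 2 := by nlinarith [sq_nonneg (N - Lσ)]
      have hBM : Bβ * (Mstar * Mstar) ≤ (|Bβ| + |Lβ| + 1) * (Mstar + 1) ^ 2 := by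
        refine mul_le_mul ?_ (by nlinarith) (by positivity) (by positivity)
        have := le_abs_self Bβ; have := abs_nonneg Lβ; linarith
      calc Bβ * Mstar * Mstar * N * Lσ = (Bβ * (Mstar * Mstar)) * (N * Lσ) := by ring
        _ ≤ ((|Bβ| + |Lβ| + 1) * (Mstar + 1) ^ 2) * (N ^ 2 + Lσ ^ 2) := by
            refine mul_le_mul hBM hNLσ (mul_nonneg hN0 hLσ0) (by positivity)
        _ ≤ C * (N ^ 2 + Lσ ^ 2) := by
            rw [hCdef]
            nlinarith [mul_nonneg (by positivity : (0:ℝ) ≤ (|Bβ| + |Lβ| + 1) * (Mstar + 1) ^ 2) hZ]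
    have hdm := abs_nonneg (m - m')
    have hdx := norm_nonneg (x - x')
    calc |Qcoag β σ s m x - Qcoag β σ s m' x'|
        ≤ |Qcoag β σ s m x - Qcoag β σ s m' x| + |Qcoag β σ s m' x - Qcoag β σ s m' x'| := htri
      _ ≤ (Bβ + Lβ) * (Mstar + 1) ^ 2 * (N * N + N * Lσ) * |m - m'| +
          Bβ * Mstar * Mstar * N * Lσ * ‖x - x'‖ := add_le_add hmlip hxlip
      _ ≤ (C * (N ^ 2 + Lσ ^ 2)) * |m - m'| + (C * (N ^ 2 + Lσ ^ 2)) * ‖x - x'‖ :=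
          add_le_add (mul_le_mul_of_nonneg_right hK1C hdm)
            (mul_le_mul_of_nonneg_right hK2C hdx)
      _ = C * (N ^ 2 + Lσ ^ 2) * (|m - m'| + ‖x - x'‖) := by ring
  refine ⟨?_, ?_, ?_⟩
  · -- (i)
    have hQC : Bβ * N * N * Mstar * Mstar / 2 ≤ C * N ^ 2 := by
      rw [hCdef, abs_of_nonneg hB0, abs_of_nonneg hL0]
      nlinarith [mul_nonneg (mul_nonneg hB0 (sq_nonneg N)) (mul_nonneg hMstar.le hMstar.le),
        mul_nonneg (mul_nonneg hB0 (sq_nonneg N)) hMstar.le,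
        mul_nonneg hB0 (sq_nonneg N),
        mul_nonneg (mul_nonneg hL0 (sq_nonneg N)) hW.le,
        mul_nonneg (sq_nonneg N) hW.le]
    have hae : ∀ᵐ s ∂(volume.restrict (Set.Icc (0:ℝ) t)),
        sSup {v | ∃ m : ℝ, ∃ x ∈ Omg, v = |Qcoag β σ s m x|} ≤ C * N ^ 2 := by
      refine (ae_transfer_Icc htt1 hσN).mono fun s hs => ?_
      refine Real.sSup_le (fun v hv => ?_) (by positivity)
      obtain ⟨m, x, hx, rfl⟩ := hv
      exact le_trans (Q_le_const hMstar hB0 hN0 hβ0 hβB hβM hs m hx) hQC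
    calc (∫ s in (0:ℝ)..t, sSup {v | ∃ m : ℝ, ∃ x ∈ Omg, v = |Qcoag β σ s m x|})
        ≤ C * N ^ 2 * t := integral_le_of_ae ht0 (by positivity) hae
      _ = C * t * N ^ 2 := by ring
  · -- (ii)
    exact ((ae_transfer_Ioo htt1 hσN).and (ae_transfer_Ioo htt1 hσL)).mono
      fun s hs => main s hs.1 hs.2
  · -- (iii)
    have hae : ∀ᵐ s ∂(volume.restrict (Set.Icc (0:ℝ) t)),
        sInf {L | 0 ≤ L ∧ ∀ m m' : ℝ, ∀ x ∈ Omg, ∀ x' ∈ Omg,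
          |Qcoag β σ s m x - Qcoag β σ s m' x'| ≤ L * (|m - m'| + ‖x - x'‖)} ≤
        C * (N ^ 2 + Lσ ^ 2) := by
      refine ((ae_transfer_Icc htt1 hσN).and (ae_transfer_Icc htt1 hσL)).mono fun s hs => ?_
      refine csInf_le ⟨0, fun L hL => hL.1⟩ ⟨by positivity, ?_⟩
      exact fun m m' x hx x' hx' => main s hs.1 hs.2 m m' x hx x' hx'
    calc (∫ s in (0:ℝ)..t, sInf {L | 0 ≤ L ∧ ∀ m m' : ℝ, ∀ x ∈ Omg, ∀ x' ∈ Omg,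
          |Qcoag β σ s m x - Qcoag β σ s m' x'| ≤ L * (|m - m'| + ‖x - x'‖)})
        ≤ C * (N ^ 2 + Lσ ^ 2) * t := integral_le_of_ae ht0 (by positivity) hae
      _ = C * t * (N ^ 2 + Lσ ^ 2) := by ring

end
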